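/- Let E, F, Q be nonempty multisets of integers satisfying: (ii) for every μ ∈ ℤ, card(Q^{≤μ}) ≤ card(E^{≤μ}); (iii) for every μ ∈ ℤ, card(Q^{≥μ}) ≤ card(F^{≥μ}); (v) card(Q) = card(F). Let λ be the maximum element of Q and let F̄ be the image of F under the map t ↦ min t λ. Then: (a) for every μ ∈ ℤ, card(F̄^{≤μ}) ≤ card(E^{≤μ}); and (b) for every μ ∈ ℤ, card(Q^{≥μ}) ≤ card(F̄^{≥μ}). -/
import Mathlib


/-- the hypotheses of the key inequality are preserved by the maximal
slope reduction `F̄` of `F` to `Q`: `card(F̄^{≤μ}) ≤ card(E^{≤μ})` and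
`card(Q^{≥μ}) ≤ card(F̄^{≥μ})` for all `μ`. -/
theorem max_slope_reduction_preserves_hypotheses
    (E F Q : Multiset ℤ) (hE : E ≠ 0) (hF : F ≠ 0) (hQ : Q ≠ 0)
    (h2 : ∀ μ : ℤ, (Q.filter fun t => t ≤ μ).card ≤ (E.filter fun t => t ≤ μ).card)
    (h3 : ∀ μ : ℤ, (Q.filter fun t => μ ≤ t).card ≤ (F.filter fun t => μ ≤ t).card)
    (h5 : Multiset.card Q = Multiset.card F)
    (lam : ℤ) (hlam : lam ∈ Q) (hlam' : ∀ t ∈ Q, t ≤ lam) :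
    (∀ μ : ℤ, ((F.map fun t => min t lam).filter fun t => t ≤ μ).card ≤
        (E.filter fun t => t ≤ μ).card) ∧
      (∀ μ : ℤ, (Q.filter fun t => μ ≤ t).card ≤
        ((F.map fun t => min t lam).filter fun t => μ ≤ t).card) := by
  -- rewrite filters of mapped multiset
  have hmaple : ∀ μ : ℤ, ((F.map fun t => min t lam).filter fun t => t ≤ μ).card
      = (F.filter fun t => min t lam ≤ μ).card := by
    intro μ
    simp [← Multiset.countP_eq_card_filter, Multiset.countP_map, Function.comp]
  have hmapge : ∀ μ : ℤ, ((F.map fun t => min t lam).filter fun t => μ ≤ t).card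
      = (F.filter fun t => μ ≤ min t lam).card := by
    intro μ
    simp [← Multiset.countP_eq_card_filter, Multiset.countP_map, Function.comp]
  -- splitting a multiset by ≤ μ and ≥ μ+1
  have hsplit : ∀ (S : Multiset ℤ) (μ : ℤ),
      (S.filter fun t => t ≤ μ).card + (S.filter fun t => μ + 1 ≤ t).card = S.card := by
    intro S μ
    have h1 : (S.filter fun t => μ + 1 ≤ t) = S.filter (fun t => ¬ t ≤ μ) := by
      apply Multiset.filter_congr
      intro x _
      constructor <;> intro h <;> omega
    rw [h1, ← Multiset.card_add, Multiset.filter_add_not]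
  constructor
  · intro μ
    rw [hmaple]
    by_cases h : lam ≤ μ
    · -- everything in F̄ is ≤ lam ≤ μ
      have hall : (F.filter fun t => min t lam ≤ μ) = F := by
        apply Multiset.filter_eq_self.2
        intro x _
        exact le_trans (min_le_right _ _) h
      rw [hall, ← h5]
      have hQall : (Q.filter fun t => t ≤ μ) = Q := by
        apply Multiset.filter_eq_self.2
        intro x hx
        exact le_trans (hlam' x hx) h
      calc Multiset.card Q = (Q.filter fun t => t ≤ μ).card := by rw [hQall]
        _ ≤ _ := h2 μ
    · push_neg at h
      have heq : (F.filter fun t => min t lam ≤ μ) = F.filter fun t => t ≤ μ := by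
        apply Multiset.filter_congr
        intro x _
        constructor <;> intro hx <;> omega
      rw [heq]
      have hQle : (Q.filter fun t => t ≤ μ).card ≤ (E.filter fun t => t ≤ μ).card := h2 μ
      have hF' : (F.filter fun t => t ≤ μ).card ≤ (Q.filter fun t => t ≤ μ).card := by
        have e1 := hsplit F μ
        have e2 := hsplit Q μ
        have := h3 (μ + 1)
        omega
      exact le_trans hF' hQle
  · intro μ
    rw [hmapge]
    by_cases h : μ ≤ lam
    · have heq : (F.filter fun t => μ ≤ min t lam) = F.filter fun t => μ ≤ t := by
        apply Multiset.filter_congr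
        intro x _
        constructor <;> intro hx <;> omega
      rw [heq]
      exact h3 μ
    · push_neg at h
      have hQ0 : (Q.filter fun t => μ ≤ t) = 0 := by
        apply Multiset.filter_eq_nil.2
        intro x hx
        have := hlam' x hx
        omega
      simp [hQ0]
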